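/- Let P and Q be probability distributions on a finite set A with Q strictly positive, and suppose max_{a∈A} |P(a) − Q(a)| ≤ (min_{a∈A} Q(a))/2. Then the Kullback–Leibler divergence satisfies Σ_{a∈A} P(a)·log(P(a)/Q(a)) ≤ (1/min_{a∈A} Q(a)) · Σ_{a∈A} (P(a) − Q(a))². -/
import Mathlib


/-- Lemma A.7: if P and Q are probability distributions on a finite set A with Q strictly
positive and max |P(a) − Q(a)| ≤ (min Q)/2, then
D(P‖Q) ≤ (1/min Q) · Σ (P(a) − Q(a))². -/
theorem stmt3 {A : Type*} [Fintype A] [Nonempty A] (P Q : A → ℝ)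
    (hP0 : ∀ a, 0 ≤ P a) (hQ0 : ∀ a, 0 < Q a)
    (hP1 : ∑ a, P a = 1) (hQ1 : ∑ a, Q a = 1)
    (hclose : ∀ a, |P a - Q a| ≤ (Finset.univ.inf' Finset.univ_nonempty Q) / 2) :
    ∑ a, P a * Real.log (P a / Q a) ≤
      (1 / Finset.univ.inf' Finset.univ_nonempty Q) * ∑ a, (P a - Q a) ^ 2 := by
  set m := Finset.univ.inf' Finset.univ_nonempty Q with hm
  have hm0 : 0 < m := by
    rw [hm, Finset.lt_inf'_iff]
    intro b _; exact hQ0 b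
  have hmle : ∀ a : A, m ≤ Q a := fun a =>
    Finset.inf'_le _ (Finset.mem_univ a)
  have key : ∀ a : A, P a * Real.log (P a / Q a) ≤ (P a - Q a) + (P a - Q a) ^ 2 / Q a := by
    intro a
    have hQ := hQ0 a
    rcases eq_or_lt_of_le (hP0 a) with h0 | hp
    · rw [← h0]
      have : (0 - Q a) + (0 - Q a) ^ 2 / Q a = 0 := by field_simp; ring
      simpa using this.ge
    · have hlog : Real.log (P a / Q a) ≤ P a / Q a - 1 :=
        Real.log_le_sub_one_of_pos (div_pos hp hQ)
      calc P a * Real.log (P a / Q a) ≤ P a * (P a / Q a - 1) :=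
            mul_le_mul_of_nonneg_left hlog (hP0 a)
        _ = (P a - Q a) + (P a - Q a) ^ 2 / Q a := by field_simp; ring
  calc ∑ a, P a * Real.log (P a / Q a)
      ≤ ∑ a, ((P a - Q a) + (P a - Q a) ^ 2 / Q a) :=
        Finset.sum_le_sum fun a _ => key a
    _ = ∑ a, (P a - Q a) ^ 2 / Q a := by
        rw [Finset.sum_add_distrib, Finset.sum_sub_distrib, hP1, hQ1]; ring
    _ ≤ ∑ a, (1 / m) * (P a - Q a) ^ 2 := by
        refine Finset.sum_le_sum fun a _ => ?_
        rw [one_div, ← div_eq_inv_mul]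
        exact div_le_div_of_nonneg_left (sq_nonneg _) hm0 (hmle a)
    _ = (1 / m) * ∑ a, (P a - Q a) ^ 2 := by rw [Finset.mul_sum]
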